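/- arXiv:1806.10544 — 3 statements merged into one kernel-verified Lean document; each statement's English description precedes it below -/
import Mathlib

section
/- Let F be a field, k ≥ 2, and let P(λ) = Σ_{i=0}^{k} P_i φ_i(λ) with P_i ∈ F^{m×m} symmetric (P_i^T = P_i for all i) and P_k ≠ 0. Let L(λ) = λX + Y ∈ F[λ]^{km×km} be a pencil satisfying L(λ)·(Φ_k(λ)⊗I_m) = v ⊗ P(λ) for some v ∈ F^k. Then L(λ) is block-symmetric if and only if L(λ) is symmetric (X^T = X and Y^T = Y). In other words, DM(P) = S(P) := {L ∈ M_1(P) : L(λ) = L(λ)^T}. -/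
open Matrix

/-- The column vector `Φ_k(λ) ⊗ I_m` as a `km × m` polynomial matrix. -/
noncomputable def phiKron {F : Type*} [Field F] (φ : ℕ → Polynomial F) (k m : ℕ) :
    Matrix (Fin k × Fin m) (Fin m) (Polynomial F) :=
  Matrix.of fun p j => if p.2 = j then φ (k - 1 - (p.1 : ℕ)) else 0

/-- The matrix `v ⊗ I_m ∈ R^{km×m}` built from a vector `v ∈ R^k`. -/
def vKron {R : Type*} [Semiring R] (k m : ℕ) (v : Fin k → R) :
    Matrix (Fin k × Fin m) (Fin m) R :=
  Matrix.of fun p j => if p.2 = j then v p.1 else 0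

section Aux

open Polynomial

/-- The basis polynomials `φ_j` are nonzero of degree `j`. -/
theorem phi_deg_aux {F : Type*} [Field F]
    (α β γ : ℕ → F) (hα : ∀ j, α j ≠ 0)
    (φ : ℕ → Polynomial F) (hφ0 : φ 0 = 1)
    (hrec : ∀ j : ℕ, Polynomial.C (α j) * φ (j + 1)
      = (Polynomial.X - Polynomial.C (β j)) * φ j
        - Polynomial.C (γ j) * (if j = 0 then 0 else φ (j - 1))) :
    ∀ j, φ j ≠ 0 ∧ (φ j).natDegree = j := by
  have key : ∀ j, (φ j ≠ 0 ∧ (φ j).natDegree = j) ∧ (φ (j+1) ≠ 0 ∧ (φ (j+1)).natDegree = j+1) := by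
    intro j
    induction j with
    | zero =>
      have h0 : φ 0 ≠ 0 ∧ (φ 0).natDegree = 0 := by
        rw [hφ0]; simp
      refine ⟨h0, ?_⟩
      have h := hrec 0
      simp only [if_pos, hφ0, mul_zero, sub_zero, mul_one] at h
      have hd : (Polynomial.C (α 0) * φ 1).natDegree = 1 := by
        rw [h]; compute_degree!
      constructor
      · intro hz; rw [hz, mul_zero] at h
        have := Polynomial.X_sub_C_ne_zero (β 0)
        exact this h.symm
      · rwa [Polynomial.natDegree_C_mul (hα 0)] at hd
    | succ n ih =>
      refine ⟨ih.2, ?_⟩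
      have h := hrec (n+1)
      rw [if_neg (Nat.succ_ne_zero n)] at h
      simp only [Nat.add_sub_cancel] at h
      have hn1 := ih.2
      have hd1 : ((Polynomial.X - Polynomial.C (β (n+1))) * φ (n+1)).natDegree = n + 2 := by
        rw [Polynomial.natDegree_mul (Polynomial.X_sub_C_ne_zero _) hn1.1, hn1.2]
        rw [Polynomial.natDegree_X_sub_C]; ring
      have hd2 : (Polynomial.C (γ (n+1)) * φ n).natDegree < n + 2 := by
        calc (Polynomial.C (γ (n+1)) * φ n).natDegree
            ≤ (Polynomial.C (γ (n+1))).natDegree + (φ n).natDegree := Polynomial.natDegree_mul_le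
          _ ≤ 0 + n := by rw [Polynomial.natDegree_C, ih.1.2]
          _ < n + 2 := by omega
      have hd : (Polynomial.C (α (n+1)) * φ (n+2)).natDegree = n + 2 := by
        rw [h, Polynomial.natDegree_sub_eq_left_of_natDegree_lt (by rw [hd1]; exact hd2), hd1]
      constructor
      · intro hz; rw [hz, mul_zero] at hd; simp at hd
      · rwa [Polynomial.natDegree_C_mul (hα (n+1))] at hd
  exact fun j => (key j).1

theorem indep_lemma {R : Type*} [CommRing R] (ψ : ℕ → Polynomial R)
    (hd : ∀ t, (ψ t).natDegree = t) (hl : ∀ t, IsUnit (ψ t).leadingCoeff) :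
    ∀ n (h : ℕ → R), ∑ t ∈ Finset.range n, Polynomial.C (h t) * ψ t = 0 → ∀ t < n, h t = 0 := by
  intro n
  induction n with
  | zero => intro h _ t ht; omega
  | succ n ih =>
    intro h hsum t ht
    have htop : h n = 0 := by
      have hc := congrArg (fun p => Polynomial.coeff p n) hsum
      simp only [Polynomial.finset_sum_coeff, Polynomial.coeff_C_mul, Polynomial.coeff_zero] at hc
      rw [Finset.sum_range_succ] at hc
      have hz : ∀ s ∈ Finset.range n, h s * (ψ s).coeff n = 0 := by
        intro s hs
        rw [Polynomial.coeff_eq_zero_of_natDegree_lt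
          (by rw [hd s]; exact Finset.mem_range.mp hs), mul_zero]
      rw [Finset.sum_eq_zero hz, zero_add] at hc
      have : (ψ n).coeff n = (ψ n).leadingCoeff := by
        rw [Polynomial.leadingCoeff, hd n]
      rw [this] at hc
      exact ((hl n).mul_left_eq_zero).mp hc
    rcases Nat.lt_succ_iff_lt_or_eq.mp ht with h1 | h2
    · apply ih h _ t h1
      rw [Finset.sum_range_succ, htop, map_zero, zero_mul, add_zero] at hsum
      exact hsum
    · rw [h2]; exact htop

theorem indep_rev {R : Type*} [CommRing R] (ψ : ℕ → Polynomial R)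
    (hd : ∀ t, (ψ t).natDegree = t) (hl : ∀ t, IsUnit (ψ t).leadingCoeff)
    (k : ℕ) (h : ℕ → R)
    (hs : ∑ t ∈ Finset.range k, Polynomial.C (h t) * ψ (k - 1 - t) = 0) : ∀ t < k, h t = 0 := by
  intro t ht
  have h2 : ∀ t < k, h (k - 1 - t) = 0 := by
    apply indep_lemma ψ hd hl k (fun t => h (k - 1 - t))
    rw [← Finset.sum_range_reflect]
    rw [← hs]
    apply Finset.sum_congr rfl
    intro j hj
    have hj' : j < k := Finset.mem_range.mp hj
    rw [show k - 1 - (k - 1 - j) = j by omega]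
  have := h2 (k - 1 - t) (by omega)
  rwa [show k - 1 - (k - 1 - t) = t by omega] at this

theorem indep_fin {R : Type*} [CommRing R] (ψ : ℕ → Polynomial R)
    (hd : ∀ t, (ψ t).natDegree = t) (hl : ∀ t, IsUnit (ψ t).leadingCoeff)
    {k : ℕ} (h : Fin k → R)
    (hs : ∑ j : Fin k, Polynomial.C (h j) * ψ (k - 1 - (j : ℕ)) = 0) : ∀ j, h j = 0 := by
  classical
  set h' : ℕ → R := fun t => if ht : t < k then h ⟨t, ht⟩ else 0 with hh'
  have hs' : ∑ t ∈ Finset.range k, Polynomial.C (h' t) * ψ (k - 1 - t) = 0 := by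
    rw [← hs, ← Fin.sum_univ_eq_sum_range (fun t => Polynomial.C (h' t) * ψ (k - 1 - t)) k]
    apply Finset.sum_congr rfl
    intro j _
    simp [hh', j.isLt]
  intro j
  have := indep_rev ψ hd hl k h' hs' j j.isLt
  simpa [hh', j.isLt] using this

private lemma dsum_comm {k : ℕ} {M : Type*} [AddCommMonoid M] (f : Fin k → Fin k → M) :
    ∑ i : Fin k, ∑ j : Fin k, f i j = ∑ i : Fin k, ∑ j : Fin k, f j i :=
  Finset.sum_comm

/-- A (skew-)symmetric scalar pencil annihilating `Φ_k` is zero. -/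
theorem key_lemma {F : Type*} [Field F] (φ : ℕ → Polynomial F)
    (hφ : ∀ j, φ j ≠ 0 ∧ (φ j).natDegree = j)
    {k : ℕ} (A B : Matrix (Fin k) (Fin k) F) (ε : F) (hε : ε ≠ 0)
    (hA : ∀ i j, A j i = ε * A i j) (hB : ∀ i j, B j i = ε * B i j)
    (heq : ∀ i : Fin k, ∑ j : Fin k,
      (Polynomial.X * Polynomial.C (A i j) + Polynomial.C (B i j)) * φ (k - 1 - (j : ℕ)) = 0) :
    A = 0 ∧ B = 0 := by
  classical
  set CC : F → Polynomial (Polynomial F) := fun a => Polynomial.C (Polynomial.C a) with hCC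
  set q : Polynomial (Polynomial F) := ∑ i : Fin k, ∑ j : Fin k,
    CC (A i j) * Polynomial.C (φ (k - 1 - (i:ℕ))) * (φ (k - 1 - (j:ℕ))).map Polynomial.C with hq
  set r : Polynomial (Polynomial F) := ∑ i : Fin k, ∑ j : Fin k,
    CC (B i j) * Polynomial.C (φ (k - 1 - (i:ℕ))) * (φ (k - 1 - (j:ℕ))).map Polynomial.C with hr
  have E1 : ∀ i : Fin k, ∑ j : Fin k,
      (Polynomial.X * CC (A i j) + CC (B i j)) * (φ (k - 1 - (j:ℕ))).map Polynomial.C = 0 := by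
    intro i
    have := congrArg (Polynomial.map (Polynomial.C : F →+* Polynomial F)) (heq i)
    simpa [Polynomial.map_sum, Polynomial.map_mul, Polynomial.map_add, hCC] using this
  have E2 : ∀ i : Fin k, ∑ j : Fin k,
      (CC (A i j) * Polynomial.C Polynomial.X + CC (B i j)) * Polynomial.C (φ (k - 1 - (j:ℕ)))
        = 0 := by
    intro i
    have := congrArg (Polynomial.C : Polynomial F →+* Polynomial (Polynomial F)) (heq i)
    simpa [map_sum, _root_.map_mul, map_add, hCC] using this
  have hq1 : Polynomial.X * q + r = 0 := by
    have h1 : Polynomial.X * q + r = ∑ i : Fin k, ∑ j : Fin k,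
        Polynomial.C (φ (k - 1 - (i:ℕ))) * ((Polynomial.X * CC (A i j) + CC (B i j)) *
          (φ (k - 1 - (j:ℕ))).map Polynomial.C) := by
      rw [hq, hr]
      simp only [Finset.mul_sum]
      rw [← Finset.sum_add_distrib]
      refine Finset.sum_congr rfl fun i _ => ?_
      rw [← Finset.sum_add_distrib]
      refine Finset.sum_congr rfl fun j _ => ?_
      ring
    rw [h1]
    apply Finset.sum_eq_zero
    intro i _
    rw [← Finset.mul_sum, E1 i, mul_zero]
  have hq3 : Polynomial.C Polynomial.X * q + r = 0 := by
    have h1 : CC ε * (Polynomial.C Polynomial.X * q + r) = ∑ i : Fin k, ∑ j : Fin k,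
        (φ (k - 1 - (i:ℕ))).map Polynomial.C *
          ((CC (A i j) * Polynomial.C Polynomial.X + CC (B i j)) *
            Polynomial.C (φ (k - 1 - (j:ℕ)))) := by
      rw [hq, hr, dsum_comm (fun i j => (φ (k - 1 - (i:ℕ))).map Polynomial.C *
        ((CC (A i j) * Polynomial.C Polynomial.X + CC (B i j)) *
          Polynomial.C (φ (k - 1 - (j:ℕ)))))]
      simp only [mul_add, Finset.mul_sum]
      rw [← Finset.sum_add_distrib]
      refine Finset.sum_congr rfl fun i _ => ?_
      rw [← Finset.sum_add_distrib]
      refine Finset.sum_congr rfl fun j _ => ?_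
      rw [hA i j, hB i j]
      simp only [hCC, _root_.map_mul]
      ring
    have h2 : CC ε * (Polynomial.C Polynomial.X * q + r) = 0 := by
      rw [h1]
      apply Finset.sum_eq_zero
      intro i _
      rw [← Finset.mul_sum, E2 i, mul_zero]
    have hCCε : CC ε ≠ 0 := by
      simp only [hCC]
      exact fun h => hε (by simpa using h)
    rcases mul_eq_zero.mp h2 with h | h
    · exact absurd h hCCε
    · exact h
  have hqz : q = 0 := by
    have hsub : (Polynomial.X - Polynomial.C Polynomial.X) * q = 0 := by
      have := sub_eq_zero_of_eq (hq1.trans hq3.symm)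
      ring_nf at this ⊢
      linear_combination this
    have hXne : (Polynomial.X - Polynomial.C (Polynomial.X : Polynomial F)) ≠ 0 := by
      intro h
      have := congrArg (fun p => Polynomial.coeff p 1) h
      simp [Polynomial.coeff_C] at this
    rcases mul_eq_zero.mp hsub with h | h
    · exact absurd h hXne
    · exact h
  have hrz : r = 0 := by
    have := hq1
    rw [hqz, mul_zero, zero_add] at this
    exact this
  have hdmap : ∀ t, ((φ t).map (Polynomial.C : F →+* Polynomial F)).natDegree = t := by
    intro t
    rw [Polynomial.natDegree_map_eq_of_injective (Polynomial.C_injective), (hφ t).2]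
  have hlmap : ∀ t, IsUnit ((φ t).map (Polynomial.C : F →+* Polynomial F)).leadingCoeff := by
    intro t
    rw [Polynomial.leadingCoeff_map_of_leadingCoeff_ne_zero]
    · exact (Polynomial.isUnit_C).mpr ((Polynomial.leadingCoeff_ne_zero.mpr (hφ t).1).isUnit)
    · simp [Polynomial.leadingCoeff_ne_zero.mpr (hφ t).1]
  have hdφ : ∀ t, (φ t).natDegree = t := fun t => (hφ t).2
  have hlφ : ∀ t, IsUnit (φ t).leadingCoeff :=
    fun t => (Polynomial.leadingCoeff_ne_zero.mpr (hφ t).1).isUnit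
  have hAz : ∀ i j, A i j = 0 := by
    have hg : ∀ j : Fin k, (∑ i : Fin k, Polynomial.C (A i j) * φ (k - 1 - (i:ℕ))) = 0 := by
      apply indep_fin _ hdmap hlmap
      rw [← hqz, hq, Finset.sum_comm]
      apply Finset.sum_congr rfl
      intro j _
      rw [map_sum, Finset.sum_mul]
      apply Finset.sum_congr rfl
      intro i _
      simp only [hCC, _root_.map_mul]
      try ring
    intro i j
    exact indep_fin φ hdφ hlφ (fun i => A i j) (hg j) i
  have hBz : ∀ i j, B i j = 0 := by
    have hg : ∀ j : Fin k, (∑ i : Fin k, Polynomial.C (B i j) * φ (k - 1 - (i:ℕ))) = 0 := by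
      apply indep_fin _ hdmap hlmap
      rw [← hrz, hr, Finset.sum_comm]
      apply Finset.sum_congr rfl
      intro j _
      rw [map_sum, Finset.sum_mul]
      apply Finset.sum_congr rfl
      intro i _
      simp only [hCC, _root_.map_mul]
      try ring
    intro i j
    exact indep_fin φ hdφ hlφ (fun i => B i j) (hg j) i
  exact ⟨Matrix.ext hAz, Matrix.ext hBz⟩

theorem pencil_ext_aux {F : Type*} [Field F] {a b a' b' : F}
    (h : Polynomial.X * Polynomial.C a + Polynomial.C b
       = Polynomial.X * Polynomial.C a' + Polynomial.C b') : a = a' ∧ b = b' := by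
  constructor
  · have := congrArg (fun p => Polynomial.coeff p 1) h
    simpa [Polynomial.coeff_C] using this
  · have := congrArg (fun p => Polynomial.coeff p 0) h
    simpa [Polynomial.coeff_C] using this

end Aux

/-- For a symmetric polynomial matrix `P(λ) = Σ_{i=0}^{k} P_i φ_i(λ)` of
degree `k ≥ 2`, a pencil `L(λ) = λX + Y ∈ 𝕄₁(P)` (with some ansatz vector `v`) is
block-symmetric if and only if it is symmetric; i.e. `𝔻𝕄(P) = 𝕊(P)`. -/
theorem DM_eq_symmetric_pencils
    {F : Type*} [Field F] {m k : ℕ} (hk : 2 ≤ k)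
    (α β γ : ℕ → F) (hα : ∀ j, α j ≠ 0)
    (φ : ℕ → Polynomial F) (hφ0 : φ 0 = 1)
    (hrec : ∀ j : ℕ, Polynomial.C (α j) * φ (j + 1)
      = (Polynomial.X - Polynomial.C (β j)) * φ j
        - Polynomial.C (γ j) * (if j = 0 then 0 else φ (j - 1)))
    (P : ℕ → Matrix (Fin m) (Fin m) F) (hPsym : ∀ i, (P i)ᵀ = P i) (hPk : P k ≠ 0)
    (X Y : Matrix (Fin k × Fin m) (Fin k × Fin m) F)
    (L : Matrix (Fin k × Fin m) (Fin k × Fin m) (Polynomial F))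
    (hL : L = Matrix.of fun p q => Polynomial.X * Polynomial.C (X p q) + Polynomial.C (Y p q))
    (v : Fin k → F)
    (hansatz : L * phiKron φ k m
      = vKron k m (fun i => Polynomial.C (v i)) *
          (∑ i ∈ Finset.range (k + 1), (P i).map (fun a => φ i * Polynomial.C a))) :
    (∀ (i j : Fin k) (r s : Fin m), L (i, r) (j, s) = L (j, r) (i, s)) ↔
      (Xᵀ = X ∧ Yᵀ = Y) := by
  classical
  have hφ : ∀ j, φ j ≠ 0 ∧ (φ j).natDegree = j := phi_deg_aux α β γ hα φ hφ0 hrec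
  have hLent : ∀ p q, L p q = Polynomial.X * Polynomial.C (X p q) + Polynomial.C (Y p q) := by
    intro p q; rw [hL]; rfl
  have scalar : ∀ (i : Fin k) (r s : Fin m),
      ∑ j : Fin k, L (i, r) (j, s) * φ (k - 1 - (j : ℕ))
        = Polynomial.C (v i) * ∑ n ∈ Finset.range (k + 1), φ n * Polynomial.C ((P n) r s) := by
    intro i r s
    have h := congrArg (fun M => M (i, r) s) hansatz
    simp only [Matrix.mul_apply, phiKron, vKron, Matrix.of_apply, Fintype.sum_prod_type,
      mul_ite, ite_mul, mul_zero, zero_mul, Finset.sum_ite_eq, Finset.sum_ite_eq',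
      Finset.mem_univ, if_true, Matrix.sum_apply, Matrix.map_apply, Finset.mul_sum] at h
    rw [Finset.sum_comm] at h
    simp only [Finset.sum_ite_eq, Finset.sum_ite_eq', Finset.mem_univ, if_true] at h
    rw [Finset.mul_sum]
    exact h
  have hPrs : ∀ n (r s : Fin m), (P n) r s = (P n) s r := by
    intro n r s
    exact congrFun (congrFun (hPsym n) s) r
  have heqD : ∀ (r s : Fin m) (i : Fin k),
      ∑ j : Fin k, (Polynomial.X * Polynomial.C (X (i,r) (j,s) - X (i,s) (j,r))
        + Polynomial.C (Y (i,r) (j,s) - Y (i,s) (j,r))) * φ (k - 1 - (j:ℕ)) = 0 := by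
    intro r s i
    have h1 := scalar i r s
    have h2 := scalar i s r
    have hp : (∑ n ∈ Finset.range (k+1), φ n * Polynomial.C ((P n) s r))
        = ∑ n ∈ Finset.range (k+1), φ n * Polynomial.C ((P n) r s) :=
      Finset.sum_congr rfl fun n _ => by rw [hPrs n r s]
    rw [hp] at h2
    have h3 := sub_eq_zero_of_eq (h1.trans h2.symm)
    rw [← Finset.sum_sub_distrib] at h3
    rw [← h3]
    apply Finset.sum_congr rfl
    intro j _
    rw [hLent (i,r) (j,s), hLent (i,s) (j,r), map_sub, map_sub]
    ring
  have hswap_of : ∀ (ε : F), ε ≠ 0 → ∀ (r s : Fin m),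
      (∀ i j : Fin k, X (j,r) (i,s) - X (j,s) (i,r) = ε * (X (i,r) (j,s) - X (i,s) (j,r))) →
      (∀ i j : Fin k, Y (j,r) (i,s) - Y (j,s) (i,r) = ε * (Y (i,r) (j,s) - Y (i,s) (j,r))) →
      (∀ i j : Fin k, X (i,r) (j,s) = X (i,s) (j,r) ∧ Y (i,r) (j,s) = Y (i,s) (j,r)) := by
    intro ε hε r s hA hB
    have hkey := key_lemma φ hφ
      (Matrix.of fun i j => X (i,r) (j,s) - X (i,s) (j,r))
      (Matrix.of fun i j => Y (i,r) (j,s) - Y (i,s) (j,r)) ε hε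
      (fun i j => hA i j) (fun i j => hB i j)
      (fun i => heqD r s i)
    intro i j
    constructor
    · have := congrFun (congrFun hkey.1 i) j
      simpa [sub_eq_zero] using this
    · have := congrFun (congrFun hkey.2 i) j
      simpa [sub_eq_zero] using this
  constructor
  · -- block-symmetric → symmetric
    intro hbs
    have hbsXY : ∀ (i j : Fin k) (r s : Fin m),
        X (i,r) (j,s) = X (j,r) (i,s) ∧ Y (i,r) (j,s) = Y (j,r) (i,s) := by
      intro i j r s
      have h := hbs i j r s
      rw [hLent (i,r) (j,s), hLent (j,r) (i,s)] at h
      exact pencil_ext_aux h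
    have hsw : ∀ (r s : Fin m) (i j : Fin k),
        X (i,r) (j,s) = X (i,s) (j,r) ∧ Y (i,r) (j,s) = Y (i,s) (j,r) := by
      intro r s
      apply hswap_of 1 one_ne_zero r s
      · intro i j
        rw [← (hbsXY i j r s).1, ← (hbsXY i j s r).1, one_mul]
      · intro i j
        rw [← (hbsXY i j r s).2, ← (hbsXY i j s r).2, one_mul]
    constructor
    · ext ⟨j, s⟩ ⟨i, r⟩
      show X (i, r) (j, s) = X (j, s) (i, r)
      rw [(hsw r s i j).1, (hbsXY i j s r).1]
    · ext ⟨j, s⟩ ⟨i, r⟩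
      show Y (i, r) (j, s) = Y (j, s) (i, r)
      rw [(hsw r s i j).2, (hbsXY i j s r).2]
  · -- symmetric → block-symmetric
    rintro ⟨hXs, hYs⟩
    have hX' : ∀ p q, X p q = X q p := fun p q => congrFun (congrFun hXs q) p
    have hY' : ∀ p q, Y p q = Y q p := fun p q => congrFun (congrFun hYs q) p
    intro i j r s
    have hsw : ∀ (r s : Fin m) (i j : Fin k),
        X (i,r) (j,s) = X (i,s) (j,r) ∧ Y (i,r) (j,s) = Y (i,s) (j,r) := by
      intro r s
      apply hswap_of (-1) (neg_ne_zero.mpr one_ne_zero) r s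
      · intro i j
        rw [hX' (j,r) (i,s), hX' (j,s) (i,r)]
        ring
      · intro i j
        rw [hY' (j,r) (i,s), hY' (j,s) (i,r)]
        ring
    rw [hLent (i,r) (j,s), hLent (j,r) (i,s), (hsw r s i j).1, (hsw r s i j).2,
      hX' (i,s) (j,r), hY' (i,s) (j,r)]
end

section
/- Let F be a field, A ∈ F^{n×n}, B ∈ F^{n×m}, C ∈ F^{m×n}, and assume: (controllability) the n×nm matrix [B, AB, A^2B, …, A^{n−1}B] has rank n; (observability) the nm×n matrix obtained by stacking C, CA, CA^2, …, CA^{n−1} has rank n; and the rational matrix G_sp(λ) := C(λI_n − A)^{−1}B ∈ F(λ)^{m×m} is symmetric, i.e., G_sp(λ)^T = G_sp(λ) over F(λ). Then there exists a unique nonsingular matrix S ∈ F^{n×n} satisfying A^T = S^{−1}AS, C^T = S^{−1}B and B^T = CS, and moreover this S is symmetric (S^T = S). -/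
open Matrix
set_option maxHeartbeats 1000000
set_option synthInstance.maxHeartbeats 400000

/-- The matrix `(λ I_n − A)⁻¹` over the field of rational functions. -/
noncomputable def lamResolvent {F : Type*} [Field F] {n : ℕ} (A : Matrix (Fin n) (Fin n) F) :
    Matrix (Fin n) (Fin n) (RatFunc F) :=
  (Matrix.diagonal (fun _ => (RatFunc.X : RatFunc F)) - A.map (algebraMap F (RatFunc F)))⁻¹

/-- The controllability matrix `[B, AB, A²B, …, A^{n−1}B]`. -/
def ctrbMat {F : Type*} [Field F] {n m : ℕ} (A : Matrix (Fin n) (Fin n) F)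
    (B : Matrix (Fin n) (Fin m) F) : Matrix (Fin n) (Fin n × Fin m) F :=
  Matrix.of fun r p => (A ^ (p.1 : ℕ) * B) r p.2

/-- The observability matrix obtained by stacking `C, CA, CA², …, CA^{n−1}`. -/
def obsvMat {F : Type*} [Field F] {n m : ℕ} (A : Matrix (Fin n) (Fin n) F)
    (C : Matrix (Fin m) (Fin n) F) : Matrix (Fin n × Fin m) (Fin n) F :=
  Matrix.of fun p c => (C * A ^ (p.1 : ℕ)) p.2 c

lemma cancel_of_rinv {F : Type*} [Field F] {p q r : Type*} [Fintype q] [Fintype r]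
    [DecidableEq q] {M : Matrix q r F} {R : Matrix r q F} (hR : M * R = 1)
    {X Y : Matrix p q F} (h : X * M = Y * M) : X = Y := by
  have h2 := congrArg (fun Z => Z * R) h
  simpa [Matrix.mul_assoc, hR] using h2

lemma cancel_of_linv {F : Type*} [Field F] {p q r : Type*} [Fintype q] [Fintype r]
    [DecidableEq q] {M : Matrix r q F} {L : Matrix q r F} (hL : L * M = 1)
    {X Y : Matrix q p F} (h : M * X = M * Y) : X = Y := by
  have h2 := congrArg (fun Z => L * Z) h
  simpa [← Matrix.mul_assoc, hL] using h2

lemma exists_right_inv {F : Type*} [Field F] {k : Type*} [Fintype k] [DecidableEq k]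
    {n : ℕ} (M : Matrix (Fin n) k F) (h : M.rank = n) :
    ∃ R : Matrix k (Fin n) F, M * R = 1 := by
  classical
  have hrange : LinearMap.range M.mulVecLin = ⊤ := by
    apply Submodule.eq_top_of_finrank_eq
    rw [← Matrix.rank] at *
    rw [h, Module.finrank_fin_fun]
  have hsurj : Function.Surjective M.mulVecLin := LinearMap.range_eq_top.mp hrange
  choose g hg using hsurj
  refine ⟨Matrix.of fun p i => g (Pi.single i 1) p, ?_⟩
  ext i' i
  have h2 := congrFun (hg (Pi.single i 1)) i'
  simp only [Matrix.mulVecLin_apply, Matrix.mulVec, dotProduct] at h2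
  simp only [Matrix.mul_apply, Matrix.of_apply, Matrix.one_apply, h2, Pi.single_apply]

lemma natDegree_adjugate_charmatrix_le {F : Type*} [Field F] {n : ℕ} (A : Matrix (Fin n) (Fin n) F) (i j : Fin n) :
    ((charmatrix A).adjugate i j).natDegree ≤ n - 1 := by
  classical
  rw [Matrix.adjugate_apply, Matrix.det_apply]
  apply Polynomial.natDegree_sum_le_of_forall_le
  intro σ _
  have hs : (Equiv.Perm.sign σ • ∏ k, ((charmatrix A).updateRow j (Pi.single i 1)) (σ k) k).natDegree
      = (∏ k, ((charmatrix A).updateRow j (Pi.single i 1)) (σ k) k).natDegree := by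
    rcases Int.units_eq_one_or (Equiv.Perm.sign σ) with h | h <;> rw [h] <;> simp
  rw [hs]
  refine le_trans (Polynomial.natDegree_prod_le _ _) ?_
  have key : ∀ k : Fin n, (((charmatrix A).updateRow j (Pi.single i 1)) (σ k) k).natDegree
      ≤ if σ k = j then 0 else 1 := by
    intro k
    rw [Matrix.updateRow_apply]
    split
    · simp only [Pi.single_apply]
      split <;> simp
    · exact le_trans (Matrix.charmatrix_apply_natDegree_le _ _) (by split <;> simp)
  calc ∑ k, (((charmatrix A).updateRow j (Pi.single i 1)) (σ k) k).natDegree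
      ≤ ∑ k, if σ k = j then 0 else 1 := Finset.sum_le_sum fun k _ => key k
    _ ≤ n - 1 := by
        rw [← Finset.add_sum_erase _ _ (Finset.mem_univ (σ.symm j))]
        simp only [Equiv.apply_symm_apply, ite_true, if_pos, zero_add]
        calc ∑ k ∈ Finset.univ.erase (σ.symm j), (if σ k = j then 0 else 1)
            ≤ ∑ k ∈ Finset.univ.erase (σ.symm j), 1 := by
              apply Finset.sum_le_sum; intro k _; split <;> simp
          _ = n - 1 := by
              rw [Finset.sum_const, smul_eq_mul, mul_one,
                Finset.card_erase_of_mem (Finset.mem_univ _), Finset.card_univ,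
                Fintype.card_fin]

lemma markov_symmetric {F : Type*} [Field F] {n m : ℕ}
    (A : Matrix (Fin n) (Fin n) F) (B : Matrix (Fin n) (Fin m) F) (C : Matrix (Fin m) (Fin n) F)
    (hsym : (C.map (algebraMap F (RatFunc F)) * lamResolvent A *
        B.map (algebraMap F (RatFunc F)))ᵀ
      = C.map (algebraMap F (RatFunc F)) * lamResolvent A *
        B.map (algebraMap F (RatFunc F))) :
    ∀ k : ℕ, (C * A ^ k * B)ᵀ = C * A ^ k * B := by
  classical
  rcases Nat.eq_zero_or_pos n with hn | hn
  · subst hn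
    intro k
    have hz : C * A ^ k * B = 0 := by
      ext p q; simp [Matrix.mul_apply]
    rw [hz]; simp
  set φ := algebraMap (Polynomial F) (RatFunc F) with hφ
  set χ := A.charpoly with hχ
  set adjP := (charmatrix A).adjugate with hadjP
  set P := C.map Polynomial.C * adjP * B.map Polynomial.C with hP
  have hφinj : Function.Injective φ := RatFunc.algebraMap_injective F
  have hM : (Matrix.diagonal (fun _ => (RatFunc.X : RatFunc F)) - A.map (algebraMap F (RatFunc F)))
      = (charmatrix A).map φ := by
    ext i j
    simp only [Matrix.sub_apply, Matrix.map_apply, charmatrix_apply, map_sub,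
      Matrix.diagonal_apply]
    split <;> rw [hφ] <;> simp [RatFunc.algebraMap_X]
  have hdet : ((charmatrix A).map φ).det = φ χ := by
    rw [hχ, Matrix.charpoly, RingHom.map_det]; rfl
  have hχ0 : χ ≠ 0 := (Matrix.charpoly_monic A).ne_zero
  have hφχ : φ χ ≠ 0 := fun h => hχ0 (hφinj (by rw [h, map_zero]))
  have hres : lamResolvent A = (φ χ)⁻¹ • (adjP.map φ) := by
    rw [lamResolvent, hM, Matrix.inv_def, hdet, Ring.inverse_eq_inv]
    congr 1
    exact (RingHom.map_adjugate φ (charmatrix A)).symm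
  have hCmap : C.map (algebraMap F (RatFunc F)) = (C.map Polynomial.C).map φ := by
    rw [Matrix.map_map]; rfl
  have hBmap : B.map (algebraMap F (RatFunc F)) = (B.map Polynomial.C).map φ := by
    rw [Matrix.map_map]; rfl
  have hG : C.map (algebraMap F (RatFunc F)) * lamResolvent A * B.map (algebraMap F (RatFunc F))
      = (φ χ)⁻¹ • P.map φ := by
    rw [hres, hCmap, hBmap, hP, Matrix.map_mul, Matrix.map_mul, Matrix.mul_smul, Matrix.smul_mul]
  have hPmapsym : (P.map φ)ᵀ = P.map φ := by
    have h1 : ((φ χ)⁻¹ • P.map φ)ᵀ = (φ χ)⁻¹ • P.map φ := by rw [← hG]; exact hsym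
    have h2 := congrArg (fun M => (φ χ) • M) h1
    simpa only [Matrix.transpose_smul, smul_smul, mul_inv_cancel₀ hφχ, one_smul] using h2
  have hPsym : Pᵀ = P := by
    refine Matrix.ext fun p q => hφinj ?_
    have h3 := congrFun (congrFun hPmapsym p) q
    simpa only [Matrix.transpose_apply, Matrix.map_apply] using h3
  set Δ : ℕ → Matrix (Fin n) (Fin n) F := fun k => Matrix.of fun i j => (adjP i j).coeff k with hΔ
  have hPcoeff : ∀ (k : ℕ) (p q : Fin m), (P p q).coeff k = (C * Δ k * B) p q := by
    intro k p q
    rw [hP]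
    simp [Matrix.mul_apply, Polynomial.finset_sum_coeff, Polynomial.coeff_mul_C,
      Polynomial.coeff_C_mul, hΔ]
  have hΔsym : ∀ k, (C * Δ k * B)ᵀ = C * Δ k * B := by
    intro k
    refine Matrix.ext fun p q => ?_
    rw [Matrix.transpose_apply, ← hPcoeff, ← hPcoeff,
      show P q p = Pᵀ p q from rfl, hPsym]
  have hrec : ∀ k, Δ k = A * Δ (k+1) + χ.coeff (k+1) • 1 := by
    intro k
    have hcm : (Polynomial.X : Polynomial F) • adjP - (A.map Polynomial.C) * adjP = χ • 1 := by
      rw [Matrix.smul_eq_diagonal_mul, ← Matrix.sub_mul]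
      rw [show (Matrix.diagonal (fun _ : Fin n => (Polynomial.X : Polynomial F))
          - A.map Polynomial.C) = charmatrix A from rfl]
      rw [hadjP, Matrix.mul_adjugate]
      rfl
    refine Matrix.ext fun i j => ?_
    have h3 := congrFun (congrFun hcm i) j
    have h4 := congrArg (fun pp => Polynomial.coeff pp (k+1)) h3
    simp only [Matrix.sub_apply, Matrix.smul_apply, Matrix.mul_apply, Matrix.map_apply,
      smul_eq_mul, Polynomial.coeff_sub, Polynomial.coeff_X_mul,
      Polynomial.finset_sum_coeff, Polynomial.coeff_C_mul, Matrix.one_apply] at h4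
    have h5 : (Δ k) i j - ∑ l, A i l * (Δ (k+1)) l j
        = χ.coeff (k+1) * (if i = j then 1 else 0) := by
      simpa [hΔ, apply_ite (fun pp => Polynomial.coeff pp (k+1))] using h4
    simp only [Matrix.add_apply, Matrix.mul_apply, Matrix.smul_apply, Matrix.one_apply,
      smul_eq_mul, hΔ, Matrix.of_apply] at h5 ⊢
    rw [← h5]; ring
  have hΔzero : ∀ k, n ≤ k → Δ k = 0 := by
    intro k hk
    refine Matrix.ext fun i j => ?_
    simp only [hΔ, Matrix.of_apply, Matrix.zero_apply]
    apply Polynomial.coeff_eq_zero_of_natDegree_lt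
    exact lt_of_le_of_lt (natDegree_adjugate_charmatrix_le A i j) (by omega)
  have hχn : χ.coeff n = 1 := by
    have h1 : χ.natDegree = n := by
      rw [hχ, Matrix.charpoly_natDegree_eq_dim, Fintype.card_fin]
    rw [← h1]
    exact (Matrix.charpoly_monic A).coeff_natDegree
  have hΔtop : Δ (n-1) = 1 := by
    have h6 := hrec (n-1)
    rw [Nat.sub_add_cancel hn, hΔzero n le_rfl, hχn] at h6
    rw [h6]; simp
  have hrep : ∀ t, t < n →
      ∃ c : ℕ → F, Δ (n - 1 - t) = A ^ t + ∑ s ∈ Finset.range t, c s • A ^ s := by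
    intro t
    induction t with
    | zero => intro _; exact ⟨fun _ => 0, by simpa using hΔtop⟩
    | succ t ih =>
      intro ht
      obtain ⟨c, hc⟩ := ih (by omega)
      refine ⟨fun s => if s = 0 then χ.coeff (n - 1 - t) else c (s - 1), ?_⟩
      have h5 := hrec (n - 1 - (t+1))
      rw [show n - 1 - (t+1) + 1 = n - 1 - t from by omega] at h5
      rw [h5, hc, Finset.sum_range_succ']
      simp only [Nat.add_sub_cancel, if_neg (Nat.succ_ne_zero _), if_pos rfl, pow_zero]
      rw [mul_add, Finset.mul_sum]
      simp only [mul_smul_comm, ← pow_succ']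
      abel
  have hsum_sym : ∀ (s : Finset ℕ) (f : ℕ → Matrix (Fin n) (Fin n) F),
      (∀ x ∈ s, (C * f x * B)ᵀ = C * f x * B) →
      (C * (∑ x ∈ s, f x) * B)ᵀ = C * (∑ x ∈ s, f x) * B := by
    intro s f h
    rw [Matrix.mul_sum, Matrix.sum_mul, Matrix.transpose_sum]
    exact Finset.sum_congr rfl fun x hx => h x hx
  have hsmul_sym : ∀ (a : F) (X : Matrix (Fin n) (Fin n) F),
      (C * X * B)ᵀ = C * X * B → (C * (a • X) * B)ᵀ = C * (a • X) * B := by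
    intro a X h
    rw [Matrix.mul_smul, Matrix.smul_mul, Matrix.transpose_smul, h]
  have hpow : ∀ t, t < n → (C * A ^ t * B)ᵀ = C * A ^ t * B := by
    intro t
    induction t using Nat.strong_induction_on with
    | _ t ih =>
      intro ht
      obtain ⟨c, hc⟩ := hrep t ht
      have hAt : A ^ t = Δ (n-1-t) - ∑ s ∈ Finset.range t, c s • A ^ s := by
        rw [hc]; abel
      rw [hAt, Matrix.mul_sub, Matrix.sub_mul, Matrix.transpose_sub, hΔsym,
        hsum_sym _ _ (fun s hs => hsmul_sym _ _ (ih s (Finset.mem_range.mp hs)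
          (lt_trans (Finset.mem_range.mp hs) ht)))]
  intro k
  have hk := Matrix.pow_eq_aeval_mod_charpoly A k
  set r := (Polynomial.X ^ k : Polynomial F) %ₘ χ with hr
  have hrdeg : r.natDegree < n := by
    rcases eq_or_ne r 0 with h0 | h0
    · rw [h0]; simpa using hn
    · rw [Polynomial.natDegree_lt_iff_degree_lt h0]
      have h7 := Polynomial.degree_modByMonic_lt (Polynomial.X ^ k) (Matrix.charpoly_monic A)
      rw [Matrix.charpoly_degree_eq_dim, Fintype.card_fin] at h7
      exact h7
  have hk2 : A ^ k = ∑ i ∈ Finset.range n, r.coeff i • A ^ i := by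
    rw [hk]
    exact Polynomial.aeval_eq_sum_range' hrdeg A
  rw [hk2]
  exact hsum_sym _ _ (fun i hi => hsmul_sym _ _ (hpow i (Finset.mem_range.mp hi)))
/-- If `(A,B,C)` is a controllable and observable (i.e. minimal)
realization of the symmetric strictly proper rational matrix `G_sp(λ) = C(λI_n−A)⁻¹B`,
then there exists a unique nonsingular `S` with `Aᵀ = S⁻¹AS`, `Cᵀ = S⁻¹B` and `Bᵀ = CS`,
and this `S` is symmetric. -/
theorem exists_unique_symmetric_similarity
    {F : Type*} [Field F] {n m : ℕ}
    (A : Matrix (Fin n) (Fin n) F) (B : Matrix (Fin n) (Fin m) F)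
    (C : Matrix (Fin m) (Fin n) F)
    (hctrb : (ctrbMat A B).rank = n)
    (hobsv : (obsvMat A C).rank = n)
    (hsym : (C.map (algebraMap F (RatFunc F)) * lamResolvent A *
        B.map (algebraMap F (RatFunc F)))ᵀ
      = C.map (algebraMap F (RatFunc F)) * lamResolvent A *
        B.map (algebraMap F (RatFunc F))) :
    ∃ S : Matrix (Fin n) (Fin n) F,
      (IsUnit S.det ∧ Aᵀ = S⁻¹ * A * S ∧ Cᵀ = S⁻¹ * B ∧ Bᵀ = C * S ∧ Sᵀ = S) ∧
      ∀ S' : Matrix (Fin n) (Fin n) F,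
        (IsUnit S'.det ∧ Aᵀ = S'⁻¹ * A * S' ∧ Cᵀ = S'⁻¹ * B ∧ Bᵀ = C * S') → S' = S := by
  classical
  have markov := markov_symmetric A B C hsym
  set 𝒞 := ctrbMat A B with h𝒞
  set 𝒪 := obsvMat A C with h𝒪
  obtain ⟨R, hR⟩ := exists_right_inv 𝒞 hctrb
  obtain ⟨L, hL⟩ := exists_right_inv 𝒪ᵀ (by rw [Matrix.rank_transpose]; exact hobsv)
  have hRT : Rᵀ * 𝒞ᵀ = 1 := by rw [← Matrix.transpose_mul, hR, Matrix.transpose_one]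
  -- Hankel matrices are symmetric
  have hOC1 : ∀ (i j : Fin n) (p q : Fin m),
      (𝒪 * 𝒞) (i,p) (j,q) = (C * A ^ ((i:ℕ)+(j:ℕ)) * B) p q := by
    intro i j p q
    have e1 : (𝒪 * 𝒞) (i,p) (j,q) = ((C * A ^ (i:ℕ)) * (A ^ (j:ℕ) * B)) p q := rfl
    rw [e1, pow_add, ← Matrix.mul_assoc, ← Matrix.mul_assoc]
  have H0 : (𝒪 * 𝒞)ᵀ = 𝒪 * 𝒞 := by
    ext ⟨i,p⟩ ⟨j,q⟩
    rw [Matrix.transpose_apply, hOC1, hOC1, Nat.add_comm]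
    exact congrFun (congrFun (markov ((i:ℕ)+(j:ℕ))) p) q
  have H0' : 𝒪 * 𝒞 = 𝒞ᵀ * 𝒪ᵀ := by rw [← Matrix.transpose_mul]; exact H0.symm
  have hOC2 : ∀ (i j : Fin n) (p q : Fin m),
      (𝒪 * A * 𝒞) (i,p) (j,q) = (C * A ^ ((i:ℕ)+1+(j:ℕ)) * B) p q := by
    intro i j p q
    have e1 : (𝒪 * A * 𝒞) (i,p) (j,q) = ((C * A ^ (i:ℕ)) * A * (A ^ (j:ℕ) * B)) p q := rfl
    rw [e1, pow_add, pow_add, pow_one, ← Matrix.mul_assoc, ← Matrix.mul_assoc,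
      ← Matrix.mul_assoc]
  have H1 : (𝒪 * A * 𝒞)ᵀ = 𝒪 * A * 𝒞 := by
    ext ⟨i,p⟩ ⟨j,q⟩
    rw [Matrix.transpose_apply, hOC2, hOC2,
      show (j:ℕ)+1+(i:ℕ) = (i:ℕ)+1+(j:ℕ) from by omega]
    exact congrFun (congrFun (markov ((i:ℕ)+1+(j:ℕ))) p) q
  have H1' : 𝒪 * A * 𝒞 = 𝒞ᵀ * Aᵀ * 𝒪ᵀ := by
    have h2 : (𝒪 * A * 𝒞)ᵀ = 𝒞ᵀ * Aᵀ * 𝒪ᵀ := by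
      rw [Matrix.transpose_mul, Matrix.transpose_mul, ← Matrix.mul_assoc]
    rw [← h2, H1]
  set T := 𝒪ᵀ * R with hT
  clear_value T
  have hTC : T * 𝒞 = 𝒪ᵀ := by
    apply cancel_of_linv hRT
    calc 𝒞ᵀ * (T * 𝒞) = (𝒞ᵀ * 𝒪ᵀ) * (R * 𝒞) := by
          simp only [hT, Matrix.mul_assoc]
      _ = (𝒪 * 𝒞) * (R * 𝒞) := by rw [← H0']
      _ = 𝒪 * ((𝒞 * R) * 𝒞) := by simp only [Matrix.mul_assoc]
      _ = 𝒪 * 𝒞 := by rw [hR, Matrix.one_mul]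
      _ = 𝒞ᵀ * 𝒪ᵀ := H0'
  have hdetT : IsUnit T.det := by
    apply Matrix.isUnit_det_of_right_inverse (B := 𝒞 * L)
    rw [← Matrix.mul_assoc, hTC, hL]
  have hCT : 𝒞ᵀ * T = 𝒪 := by
    apply cancel_of_rinv hR
    rw [Matrix.mul_assoc, hTC, ← H0']
  have hTsym : Tᵀ = T := by
    refine cancel_of_rinv hR ?_
    calc Tᵀ * 𝒞 = (𝒞ᵀ * T)ᵀ := by rw [Matrix.transpose_mul, Matrix.transpose_transpose]
      _ = 𝒪ᵀ := by rw [hCT]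
      _ = T * 𝒞 := hTC.symm
  have hTB : T * B = Cᵀ := by
    ext c q
    have h2 := congrFun (congrFun hTC c) (⟨0, c.pos⟩, q)
    simp only [h𝒞, h𝒪, ctrbMat, obsvMat, Matrix.mul_apply, Matrix.of_apply,
      Matrix.transpose_apply] at h2 ⊢
    simpa [pow_zero, Matrix.mul_apply, Matrix.one_apply] using h2
  have hBT : Bᵀ * T = C := by
    ext p c
    have h2 := congrFun (congrFun hCT (⟨0, c.pos⟩, p)) c
    simp only [h𝒞, h𝒪, ctrbMat, obsvMat, Matrix.mul_apply, Matrix.of_apply,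
      Matrix.transpose_apply] at h2 ⊢
    simpa [pow_zero, Matrix.mul_apply, Matrix.one_apply] using h2
  have hAT : Aᵀ * T = T * A := by
    apply cancel_of_linv hRT
    apply cancel_of_rinv hR
    calc (𝒞ᵀ * (Aᵀ * T)) * 𝒞 = (𝒞ᵀ * Aᵀ) * (T * 𝒞) := by
          simp only [Matrix.mul_assoc]
      _ = 𝒞ᵀ * Aᵀ * 𝒪ᵀ := by rw [hTC]
      _ = 𝒪 * A * 𝒞 := by rw [← H1']
      _ = (𝒞ᵀ * T) * (A * 𝒞) := by rw [hCT]; simp only [Matrix.mul_assoc]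
      _ = (𝒞ᵀ * (T * A)) * 𝒞 := by simp only [Matrix.mul_assoc]
  refine ⟨T⁻¹, ⟨Matrix.isUnit_nonsing_inv_det T hdetT, ?_, ?_, ?_, ?_⟩, ?_⟩
  · rw [Matrix.nonsing_inv_nonsing_inv T hdetT, ← hAT, Matrix.mul_assoc,
      Matrix.mul_nonsing_inv T hdetT, Matrix.mul_one]
  · rw [Matrix.nonsing_inv_nonsing_inv T hdetT, hTB]
  · rw [← hBT, Matrix.mul_assoc, Matrix.mul_nonsing_inv T hdetT, Matrix.mul_one]
  · rw [Matrix.transpose_nonsing_inv, hTsym]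
  · rintro S' ⟨hdS', hA', hC', hB'⟩
    have hT'A : Aᵀ * S'⁻¹ = S'⁻¹ * A := by
      have h2 := congrArg (fun M => M * S'⁻¹) hA'
      simpa [Matrix.mul_assoc, Matrix.mul_nonsing_inv S' hdS'] using h2
    have hT'pow : ∀ k : ℕ, S'⁻¹ * A ^ k = (Aᵀ) ^ k * S'⁻¹ := by
      intro k
      induction k with
      | zero => simp
      | succ k ih =>
        rw [pow_succ, pow_succ, ← Matrix.mul_assoc, ih, Matrix.mul_assoc, ← hT'A,
          ← Matrix.mul_assoc]
    have hcol : ∀ k : ℕ, S'⁻¹ * (A ^ k * B) = (C * A ^ k)ᵀ := by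
      intro k
      rw [← Matrix.mul_assoc, hT'pow, Matrix.mul_assoc, ← hC',
        Matrix.transpose_mul, Matrix.transpose_pow]
    have hT'C : S'⁻¹ * 𝒞 = 𝒪ᵀ := by
      ext c kq
      have h2 := congrFun (congrFun (hcol (kq.1 : ℕ)) c) kq.2
      simp only [h𝒞, h𝒪, ctrbMat, obsvMat, Matrix.mul_apply, Matrix.of_apply,
        Matrix.transpose_apply] at h2 ⊢
      simpa [Matrix.mul_apply] using h2
    have hTT' : S'⁻¹ = T := cancel_of_rinv hR (hT'C.trans hTC.symm)
    rw [← Matrix.nonsing_inv_nonsing_inv S' hdS', hTT']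
end

section
/- Let F be a field, A ∈ F^{n×n}, B ∈ F^{n×m}, C ∈ F^{m×n}, and assume: the n×nm matrix [B, AB, A^2B, …, A^{n−1}B] has rank n; the nm×n matrix obtained by stacking C, CA, CA^2, …, CA^{n−1} has rank n; and G_sp(λ) := C(λI_n − A)^{−1}B ∈ F(λ)^{m×m} is symmetric over F(λ). Then there exist W ∈ F^{m×n} and symmetric matrices S_1, S_2 ∈ F^{n×n} with S_1 nonsingular such that C(λI_n − A)^{−1}B = W(λS_1 − S_2)^{−1}W^T over F(λ); that is, G_sp(λ) admits a symmetric minimal state-space realization. -/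
open Matrix Polynomial

set_option synthInstance.maxHeartbeats 1000000
set_option maxHeartbeats 1600000

namespace SymRealAux

variable {F : Type*} [Field F]

/-- strictly proper rational function (or zero) -/
def SP (f : RatFunc F) : Prop := f = 0 ∨ f.intDegree < 0

lemma SP.zero : SP (0 : RatFunc F) := Or.inl rfl

lemma SP.add {f g : RatFunc F} (hf : SP f) (hg : SP g) : SP (f + g) := by
  rcases hf with rfl | hf
  · simpa using hg
  rcases hg with rfl | hg
  · rw [add_zero]; exact Or.inr hf
  by_cases h : f + g = 0
  · exact Or.inl h
  · right
    have hf0 : f ≠ 0 := by rintro rfl; simp at hf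
    have hg0 : g ≠ 0 := by rintro rfl; simp at hg
    exact lt_of_le_of_lt (RatFunc.intDegree_add_le hg0 h) (max_lt hf hg)

lemma SP.neg {f : RatFunc F} (hf : SP f) : SP (-f) := by
  rcases hf with rfl | hf
  · simpa using SP.zero
  · right; rwa [RatFunc.intDegree_neg]

lemma SP.sub {f g : RatFunc F} (hf : SP f) (hg : SP g) : SP (f - g) := by
  simpa [sub_eq_add_neg] using hf.add hg.neg

lemma SP.const_eq_zero {c : F} (h : SP (algebraMap F (RatFunc F) c)) : c = 0 := by
  by_contra hc
  rcases h with h | h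
  · exact hc (by simpa using (RingHom.injective (algebraMap F (RatFunc F))) (by simpa using h))
  · rw [RatFunc.algebraMap_eq_C, RatFunc.intDegree_C] at h
    exact absurd h (by norm_num)

lemma intDegree_inv (f : RatFunc F) : f⁻¹.intDegree = -f.intDegree := by
  by_cases hf : f = 0
  · simp [hf, RatFunc.intDegree_zero]
  have h1 : (f * f⁻¹).intDegree = 0 := by rw [mul_inv_cancel₀ hf, RatFunc.intDegree_one]
  rw [RatFunc.intDegree_mul hf (inv_ne_zero hf)] at h1
  omega

lemma adjugate_charmatrix_natDegree_lt {n : ℕ} (hn : 0 < n) (A : Matrix (Fin n) (Fin n) F)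
    (i j : Fin n) : ((adjugate (charmatrix A)) i j).natDegree < n := by
  rw [adjugate_apply, det_apply]
  have key : ∀ σ : Equiv.Perm (Fin n),
      (Equiv.Perm.sign σ • ∏ k, ((charmatrix A).updateRow j (Pi.single i 1)) (σ k) k).natDegree
        ≤ n - 1 := by
    intro σ
    have hsmul : (Equiv.Perm.sign σ •
        ∏ k, ((charmatrix A).updateRow j (Pi.single i 1)) (σ k) k).natDegree
        = (∏ k, ((charmatrix A).updateRow j (Pi.single i 1)) (σ k) k).natDegree := by
      rcases Int.units_eq_one_or (Equiv.Perm.sign σ) with h | h <;>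
        simp [h, Units.smul_def, natDegree_neg]
    rw [hsmul]
    refine le_trans (natDegree_prod_le _ _) ?_
    have hterm : ∀ k : Fin n,
        (((charmatrix A).updateRow j (Pi.single i 1)) (σ k) k).natDegree
          ≤ if σ k = j then 0 else 1 := by
      intro k
      rw [Matrix.updateRow_apply]
      split_ifs with h
      · rw [Pi.single_apply]
        split_ifs <;> simp
      · refine le_trans (charmatrix_apply_natDegree_le (M := A) (σ k) k) ?_
        split_ifs <;> simp
    refine le_trans (Finset.sum_le_sum fun k _ => hterm k) ?_
    have h1 : ∑ k : Fin n, (if σ k = j then (0:ℕ) else 1)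
        = ∑ r : Fin n, (if r = j then (0:ℕ) else 1) :=
      Equiv.sum_comp σ (fun r => if r = j then (0:ℕ) else 1)
    rw [h1, ← Finset.sum_erase_add _ _ (Finset.mem_univ j), if_pos rfl, add_zero]
    have h2 : ∀ r ∈ Finset.univ.erase j, (if r = j then (0:ℕ) else 1) = 1 := by
      intro r hr
      rw [if_neg (Finset.ne_of_mem_erase hr)]
    rw [Finset.sum_congr rfl h2, Finset.sum_const, smul_eq_mul, mul_one,
      Finset.card_erase_of_mem (Finset.mem_univ j), Finset.card_univ, Fintype.card_fin]
  calc (∑ σ : Equiv.Perm (Fin n), Equiv.Perm.sign σ •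
        ∏ k, ((charmatrix A).updateRow j (Pi.single i 1)) (σ k) k).natDegree
      ≤ n - 1 := natDegree_sum_le_of_forall_le _ _ (fun σ _ => key σ)
    _ < n := by omega

lemma exists_right_inverse {p q : Type*} [Fintype p] [Fintype q] [DecidableEq p]
    (M : Matrix p q F) (h : M.rank = Fintype.card p) :
    ∃ N : Matrix q p F, M * N = 1 := by
  have hr : LinearMap.range M.mulVecLin = ⊤ := by
    apply Submodule.eq_top_of_finrank_eq
    rw [Matrix.rank] at h
    rw [h, Module.finrank_fintype_fun_eq_card]
  have hsurj : Function.Surjective M.mulVecLin := LinearMap.range_eq_top.mp hr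
  choose v hv using hsurj
  refine ⟨Matrix.of (fun r c => v (Pi.single c 1) r), ?_⟩
  ext i c
  have := congrFun (hv (Pi.single c 1)) i
  simp only [mulVecLin_apply] at this
  rw [Matrix.mul_apply, Matrix.one_apply]
  simp only [Matrix.of_apply]
  rw [show ∑ r, M i r * v (Pi.single c 1) r = M.mulVec (v (Pi.single c 1)) i from rfl, this,
    Pi.single_apply]


lemma mulVec_eq_zero_of_rank {p q : Type*} [Fintype p] [Fintype q] (M : Matrix p q F)
    (h : M.rank = Fintype.card q) : ∀ v, M.mulVec v = 0 → v = 0 := by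
  intro v hv
  have hk : LinearMap.ker M.mulVecLin = ⊥ := by
    have hrk := LinearMap.finrank_range_add_finrank_ker M.mulVecLin
    rw [Module.finrank_fintype_fun_eq_card] at hrk
    rw [Matrix.rank] at h
    have : Module.finrank F (LinearMap.ker M.mulVecLin) = 0 := by omega
    exact Submodule.finrank_eq_zero.mp this
  have : v ∈ LinearMap.ker M.mulVecLin := by
    rw [LinearMap.mem_ker, mulVecLin_apply, hv]
  rwa [hk, Submodule.mem_bot] at this

lemma entry_natDegree_mul_le {a b c : Type*} [Fintype b] {P : Matrix a b F[X]}
    {Q : Matrix b c F[X]} {d₁ d₂ : ℕ} (hP : ∀ i j, (P i j).natDegree ≤ d₁)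
    (hQ : ∀ i j, (Q i j).natDegree ≤ d₂) : ∀ i j, ((P * Q) i j).natDegree ≤ d₁ + d₂ := by
  intro i j
  rw [Matrix.mul_apply]
  refine natDegree_sum_le_of_forall_le _ _ (fun r _ => ?_)
  exact le_trans (natDegree_mul_le) (add_le_add (hP i r) (hQ r j))

lemma markov_symmetric {n m : ℕ} (hn : 0 < n) (A : Matrix (Fin n) (Fin n) F)
    (B : Matrix (Fin n) (Fin m) F) (C : Matrix (Fin m) (Fin n) F)
    (hsym : (C.map (algebraMap F (RatFunc F)) *
        (Matrix.diagonal (fun _ => (RatFunc.X : RatFunc F))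
          - A.map (algebraMap F (RatFunc F)))⁻¹ * B.map (algebraMap F (RatFunc F)))ᵀ
      = C.map (algebraMap F (RatFunc F)) *
        (Matrix.diagonal (fun _ => (RatFunc.X : RatFunc F))
          - A.map (algebraMap F (RatFunc F)))⁻¹ * B.map (algebraMap F (RatFunc F))) :
    ∀ k : ℕ, (C * A ^ k * B)ᵀ = C * A ^ k * B := by
  set φ := algebraMap F (RatFunc F) with hφ
  set φ' := algebraMap F[X] (RatFunc F) with hφ'
  set e : Matrix (Fin n) (Fin n) (RatFunc F) :=
    Matrix.diagonal (fun _ => (RatFunc.X : RatFunc F)) - A.map φ with he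
  have hchar : e = (charmatrix A).map φ' := by
    ext i j
    rw [he, Matrix.sub_apply, Matrix.map_apply, Matrix.map_apply, charmatrix_apply, map_sub,
      RatFunc.algebraMap_C, ← RatFunc.algebraMap_eq_C]
    by_cases h : i = j
    · subst h
      simp [hφ, hφ', RatFunc.algebraMap_X, RatFunc.algebraMap_eq_C]
    · simp [Matrix.diagonal_apply_ne _ h, hφ, hφ', RatFunc.algebraMap_eq_C]
  have hdet : e.det = φ' (charpoly A) := by
    rw [hchar, charpoly, ← RingHom.mapMatrix_apply, ← RingHom.map_det]
  have hpne : (charpoly A) ≠ 0 := (charpoly_monic A).ne_zero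
  have hdu : IsUnit e.det := by
    rw [hdet]
    exact isUnit_iff_ne_zero.mpr
      ((map_ne_zero_iff _ (RatFunc.algebraMap_injective F)).mpr hpne)
  set R := e⁻¹ with hR
  have heR : e * R = 1 := mul_nonsing_inv e hdu
  have hRe : R * e = 1 := nonsing_inv_mul e hdu
  have hAdiag : A.map φ * Matrix.diagonal (fun _ => (RatFunc.X : RatFunc F))
      = Matrix.diagonal (fun _ => (RatFunc.X : RatFunc F)) * A.map φ := by
    ext i j; rw [Matrix.mul_diagonal, Matrix.diagonal_mul, mul_comm]
  have hAe : A.map φ * e = e * A.map φ := by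
    rw [he, Matrix.mul_sub, Matrix.sub_mul, hAdiag]
  have hAR : A.map φ * R = R * A.map φ := by
    calc A.map φ * R = (R * e) * (A.map φ * R) := by rw [hRe, one_mul]
      _ = R * (A.map φ * e) * R := by rw [hAe]; noncomm_ring
      _ = (R * A.map φ) * (e * R) := by noncomm_ring
      _ = R * A.map φ := by rw [heR, mul_one]
  have hXR : A.map φ * R = (RatFunc.X : RatFunc F) • R - 1 := by
    have h1 : Matrix.diagonal (fun _ => (RatFunc.X : RatFunc F)) * R
        = (RatFunc.X : RatFunc F) • R := by
      ext i j; rw [Matrix.diagonal_mul, Matrix.smul_apply, smul_eq_mul]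
    have h2 := heR
    rw [he, Matrix.sub_mul, h1] at h2
    rw [eq_sub_iff_add_eq]
    rw [sub_eq_iff_eq_add] at h2
    rw [h2, add_comm]
  have hpow : ∀ (k : ℕ), (A ^ k).map φ = (A.map φ) ^ k := by
    intro k
    simpa [RingHom.mapMatrix_apply] using map_pow (φ.mapMatrix) A k
  set M : ℕ → Matrix (Fin m) (Fin m) (RatFunc F) :=
    fun k => C.map φ * (A.map φ) ^ k * R * B.map φ with hM
  have hmapmul : ∀ k, (C * A ^ k * B).map φ = C.map φ * (A.map φ) ^ k * B.map φ := by
    intro k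
    rw [Matrix.map_mul, Matrix.map_mul, hpow]
  have hrec : ∀ k, (C * A ^ k * B).map φ = (RatFunc.X : RatFunc F) • M k - M (k + 1) := by
    intro k
    have h1 : M (k+1) = C.map φ * (A.map φ) ^ k * (A.map φ * R) * B.map φ := by
      rw [hM]
      simp only [pow_succ, Matrix.mul_assoc]
    rw [h1, hXR, Matrix.mul_sub, Matrix.sub_mul, Matrix.mul_one, hmapmul,
      Matrix.mul_smul, Matrix.smul_mul, hM]
    simp only [sub_sub_cancel]
  set adjP : Matrix (Fin n) (Fin n) F[X] := adjugate (charmatrix A) with hadjP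
  have hadjmap : adjugate e = adjP.map ⇑φ' := by
    rw [hchar, hadjP]
    simpa [RingHom.mapMatrix_apply] using (RingHom.map_adjugate φ' (charmatrix A)).symm
  set NP : ℕ → Matrix (Fin m) (Fin m) F[X] :=
    fun k => C.map Polynomial.C * (A.map Polynomial.C) ^ k * adjP * B.map Polynomial.C with hNP
  have hcomp : ∀ a : F, φ' (Polynomial.C a) = φ a := by
    intro a; rw [hφ', RatFunc.algebraMap_C, hφ, RatFunc.algebraMap_eq_C]
  have hmapC : ∀ {p q : ℕ} (M : Matrix (Fin p) (Fin q) F),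
      (M.map Polynomial.C).map ⇑φ' = M.map ⇑φ := by
    intro p q M
    rw [Matrix.map_map]
    ext i j
    exact hcomp (M i j)
  have hpowC : ((A.map Polynomial.C) ^ (0:ℕ)).map ⇑φ' = (A.map φ) ^ (0:ℕ) := by
    simp
  have hpowC' : ∀ k : ℕ, ((A.map Polynomial.C) ^ k).map ⇑φ' = (A.map φ) ^ k := by
    intro k
    have h1 : ((A.map Polynomial.C) ^ k).map ⇑φ' = ((A.map Polynomial.C).map ⇑φ') ^ k := by
      simpa [RingHom.mapMatrix_apply] using map_pow (φ'.mapMatrix) (A.map Polynomial.C) k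
    rw [h1, hmapC]
  have hMrep : ∀ k, M k = (e.det)⁻¹ • (NP k).map ⇑φ' := by
    intro k
    have hRrep : R = (e.det)⁻¹ • adjP.map ⇑φ' := by
      rw [hR, Matrix.inv_def, hadjmap, Ring.inverse_eq_inv]
    rw [hM, hNP]
    simp only [Matrix.map_mul]
    rw [hmapC, hmapC, hpowC', hRrep]
    simp only [Matrix.mul_smul, Matrix.smul_mul]
  have hadjbd : ∀ i j, (adjP i j).natDegree ≤ n - 1 := fun i j =>
    Nat.le_sub_one_of_lt (adjugate_charmatrix_natDegree_lt hn A i j)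
  have hC0 : ∀ i j, ((C.map Polynomial.C) i j).natDegree ≤ 0 := by
    intro i j; simp [Matrix.map_apply]
  have hB0 : ∀ i j, ((B.map Polynomial.C) i j).natDegree ≤ 0 := by
    intro i j; simp [Matrix.map_apply]
  have hA0 : ∀ (k : ℕ) (i j : Fin n), (((A.map Polynomial.C) ^ k) i j).natDegree ≤ 0 := by
    intro k
    induction k with
    | zero =>
      intro i j
      rw [pow_zero]
      rw [Matrix.one_apply]
      split_ifs <;> simp
    | succ k ih =>
      intro i j
      rw [pow_succ]
      have := entry_natDegree_mul_le (Q := A.map Polynomial.C) (d₂ := 0) ih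
        (fun i j => by rw [Matrix.map_apply]; simp) i j
      simpa using this
  have hNPdeg : ∀ k i j, ((NP k) i j).natDegree < n := by
    intro k i j
    have h1 := entry_natDegree_mul_le hC0 (hA0 k)
    have h2 := entry_natDegree_mul_le h1 hadjbd
    have h3 := entry_natDegree_mul_le h2 hB0 i j
    have hb : ((NP k) i j).natDegree ≤ 0 + 0 + (n - 1) + 0 := h3
    omega
  have hcp : (charpoly A).natDegree = n := by
    rw [charpoly_natDegree_eq_dim, Fintype.card_fin]
  have hSP : ∀ k i j, SP (M k i j) := by
    intro k i j
    rw [hMrep k, Matrix.smul_apply, Matrix.map_apply, smul_eq_mul]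
    by_cases h0 : (NP k) i j = 0
    · rw [h0, map_zero, mul_zero]
      exact SP.zero
    · right
      have hdne : e.det ≠ 0 := by
        rw [hdet]
        exact (map_ne_zero_iff _ (RatFunc.algebraMap_injective F)).mpr hpne
      have hN' : φ' ((NP k) i j) ≠ 0 :=
        (map_ne_zero_iff _ (RatFunc.algebraMap_injective F)).mpr h0
      rw [RatFunc.intDegree_mul (inv_ne_zero hdne) hN', intDegree_inv, hdet, hφ',
        RatFunc.intDegree_polynomial, RatFunc.intDegree_polynomial, hcp]
      have hdeg := hNPdeg k i j
      omega
  have base : (M 0)ᵀ = M 0 := by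
    rw [hM]
    simp only [pow_zero, Matrix.mul_one]
    exact hsym
  have step : ∀ k, (M k)ᵀ = M k →
      ((C * A ^ k * B)ᵀ = C * A ^ k * B) ∧ (M (k+1))ᵀ = M (k+1) := by
    intro k hk
    have hE : ((C * A ^ k * B).map ⇑φ)ᵀ - (C * A ^ k * B).map ⇑φ
        = M (k+1) - (M (k+1))ᵀ := by
      rw [hrec k, Matrix.transpose_sub, Matrix.transpose_smul, hk]
      abel
    have hz : ∀ i j, (C * A ^ k * B) j i - (C * A ^ k * B) i j = 0 := by
      intro i j
      apply SP.const_eq_zero (F := F)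
      have he2 : φ ((C * A ^ k * B) j i - (C * A ^ k * B) i j)
          = (M (k+1) - (M (k+1))ᵀ) i j := by
        rw [map_sub, ← hE, Matrix.sub_apply, Matrix.transpose_apply, Matrix.map_apply,
          Matrix.map_apply]
      show SP (φ _)
      rw [he2, Matrix.sub_apply]
      exact (hSP (k+1) i j).sub (by rw [Matrix.transpose_apply]; exact hSP (k+1) j i)
    have hmk : (C * A ^ k * B)ᵀ = C * A ^ k * B := by
      ext i j
      rw [Matrix.transpose_apply]
      exact sub_eq_zero.mp (hz i j)
    refine ⟨hmk, ?_⟩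
    have hz2 : M (k+1) - (M (k+1))ᵀ = 0 := by
      rw [← hE, ← Matrix.transpose_map, hmk, sub_self]
    exact (sub_eq_zero.mp hz2).symm
  have msym : ∀ k, (M k)ᵀ = M k := by
    intro k
    induction k with
    | zero => exact base
    | succ k ih => exact (step k ih).2
  exact fun k => (step k (msym k)).1

end SymRealAux

open SymRealAux in
theorem exists_symmetric_realization'
    {F : Type*} [Field F] {n m : ℕ}
    (A : Matrix (Fin n) (Fin n) F) (B : Matrix (Fin n) (Fin m) F)
    (C : Matrix (Fin m) (Fin n) F)
    (hctrb : (Matrix.of fun r (p : Fin n × Fin m) => (A ^ (p.1 : ℕ) * B) r p.2 :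
        Matrix (Fin n) (Fin n × Fin m) F).rank = n)
    (hobsv : (Matrix.of fun (p : Fin n × Fin m) c => (C * A ^ (p.1 : ℕ)) p.2 c :
        Matrix (Fin n × Fin m) (Fin n) F).rank = n)
    (hsym : (C.map (algebraMap F (RatFunc F)) *
        (Matrix.diagonal (fun _ => (RatFunc.X : RatFunc F))
          - A.map (algebraMap F (RatFunc F)))⁻¹ *
        B.map (algebraMap F (RatFunc F)))ᵀ
      = C.map (algebraMap F (RatFunc F)) *
        (Matrix.diagonal (fun _ => (RatFunc.X : RatFunc F))
          - A.map (algebraMap F (RatFunc F)))⁻¹ *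
        B.map (algebraMap F (RatFunc F))) :
    ∃ (W : Matrix (Fin m) (Fin n) F) (S₁ S₂ : Matrix (Fin n) (Fin n) F),
      S₁ᵀ = S₁ ∧ S₂ᵀ = S₂ ∧ IsUnit S₁.det ∧
      C.map (algebraMap F (RatFunc F)) *
        (Matrix.diagonal (fun _ => (RatFunc.X : RatFunc F))
          - A.map (algebraMap F (RatFunc F)))⁻¹ *
        B.map (algebraMap F (RatFunc F))
        = W.map (algebraMap F (RatFunc F)) *
            (Matrix.of (fun i j => (RatFunc.X : RatFunc F) * algebraMap F (RatFunc F) (S₁ i j)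
              - algebraMap F (RatFunc F) (S₂ i j)))⁻¹ *
            (Wᵀ).map (algebraMap F (RatFunc F)) := by
  rcases Nat.eq_zero_or_pos n with hn | hn
  · subst hn
    refine ⟨0, 1, 1, Matrix.transpose_one, Matrix.transpose_one, by simp, ?_⟩
    ext i j
    rw [Matrix.mul_apply, Matrix.mul_apply]
    simp
  classical
  have markov := markov_symmetric hn A B C hsym
  set K : Matrix (Fin n) (Fin n × Fin m) F :=
    Matrix.of fun r (p : Fin n × Fin m) => (A ^ (p.1 : ℕ) * B) r p.2 with hKdef
  set O : Matrix (Fin n × Fin m) (Fin n) F :=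
    Matrix.of fun (p : Fin n × Fin m) c => (C * A ^ (p.1 : ℕ)) p.2 c with hOdef
  have hOK : ∀ (p q : Fin n × Fin m),
      (O * K) p q = (C * A ^ ((p.1 : ℕ) + (q.1 : ℕ)) * B) p.2 q.2 := by
    intro p q
    rw [pow_add,
      show C * (A ^ (p.1 : ℕ) * A ^ (q.1 : ℕ)) * B
        = (C * A ^ (p.1 : ℕ)) * (A ^ (q.1 : ℕ) * B) by simp only [Matrix.mul_assoc],
      Matrix.mul_apply, Matrix.mul_apply]
    rfl
  have hH : (O * K)ᵀ = O * K := by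
    ext p q
    rw [Matrix.transpose_apply, hOK, hOK, Nat.add_comm (q.1 : ℕ) (p.1 : ℕ)]
    conv_lhs => rw [← markov ((p.1 : ℕ) + (q.1 : ℕ))]
    rfl
  obtain ⟨K', hKK'⟩ := exists_right_inverse K (by rw [Fintype.card_fin]; exact hctrb)
  have hKTinj := mulVec_eq_zero_of_rank Kᵀ
    (by rw [Matrix.rank_transpose, Fintype.card_fin]; exact hctrb)
  have hOz : ∀ x : Fin n × Fin m → F, K.mulVec x = 0 → Oᵀ.mulVec x = 0 := by
    intro x hx
    refine hKTinj _ ?_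
    have h1 : Kᵀ.mulVec (Oᵀ.mulVec x) = ((O * K)ᵀ).mulVec x := by
      rw [Matrix.transpose_mul, ← Matrix.mulVec_mulVec]
    rw [h1, hH, ← Matrix.mulVec_mulVec, hx, Matrix.mulVec_zero]
  have hOmat : ∀ (P : Matrix (Fin n × Fin m) (Fin n × Fin m) F), K * P = 0 → Oᵀ * P = 0 := by
    intro P hP
    ext i c
    have hx : K.mulVec (fun r => P r c) = 0 := by
      funext i'
      have : K.mulVec (fun r => P r c) i' = (K * P) i' c := by
        rw [Matrix.mul_apply]; rfl
      rw [this, hP]; rfl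
    have hc := hOz (fun r => P r c) hx
    have : (Oᵀ * P) i c = Oᵀ.mulVec (fun r => P r c) i := by
      rw [Matrix.mul_apply]; rfl
    rw [this, hc]; rfl
  set T : Matrix (Fin n) (Fin n) F := Oᵀ * K' with hTdef
  have hTK : T * K = Oᵀ := by
    have h1 : K * (K' * K - 1) = 0 := by
      rw [Matrix.mul_sub, ← Matrix.mul_assoc, hKK', Matrix.one_mul, Matrix.mul_one, sub_self]
    have h2 := hOmat _ h1
    rw [Matrix.mul_sub, Matrix.mul_one, sub_eq_zero] at h2
    rw [hTdef, Matrix.mul_assoc, h2]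
  have hmulK : ∀ (U : Matrix (Fin n) (Fin n) F) (p : Fin n × Fin m) (i : Fin n),
      (U * K) i p = (U * (A ^ (p.1 : ℕ) * B)) i p.2 := by
    intro U p i
    rw [Matrix.mul_apply, Matrix.mul_apply]
    rfl
  have hTk : ∀ k : ℕ, k < n → T * (A ^ k * B) = (Aᵀ) ^ k * Cᵀ := by
    intro k hk
    ext i j
    calc (T * (A ^ k * B)) i j = (T * K) i (⟨k, hk⟩, j) := (hmulK T (⟨k, hk⟩, j) i).symm
      _ = Oᵀ i (⟨k, hk⟩, j) := by rw [hTK]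
      _ = ((Aᵀ) ^ k * Cᵀ) i j := by
          rw [show (Aᵀ) ^ k * Cᵀ = (C * A ^ k)ᵀ by
            rw [Matrix.transpose_mul, Matrix.transpose_pow]]
          rfl
  have hTpow : ∀ k : ℕ, k ≤ n → T * (A ^ k * B) = (Aᵀ) ^ k * Cᵀ := by
    intro k hk
    rcases lt_or_eq_of_le hk with hlt | rfl
    · exact hTk k hlt
    · set q : F[X] := X ^ k - charpoly A with hq
      have haq : aeval A q = A ^ k := by
        rw [hq, map_sub, aeval_X_pow, aeval_self_charpoly, sub_zero]
      by_cases hq0 : q = 0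
      · have hAn : A ^ k = 0 := by rw [← haq, hq0, map_zero]
        have hAnT : (Aᵀ) ^ k = 0 := by rw [← Matrix.transpose_pow, hAn, Matrix.transpose_zero]
        rw [hAn, hAnT]
        simp
      · have hdeg : q.natDegree < k := by
          have hd : q.degree < (X ^ k : F[X]).degree := by
            refine degree_sub_lt ?_ (pow_ne_zero _ X_ne_zero) ?_
            · rw [degree_X_pow, charpoly_degree_eq_dim, Fintype.card_fin]
            · rw [leadingCoeff_X_pow]
              exact (charpoly_monic A).symm
          rw [degree_X_pow] at hd
          exact (natDegree_lt_iff_degree_lt hq0).mpr hd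
        have hsum : A ^ k = ∑ i ∈ Finset.range k, q.coeff i • A ^ i := by
          rw [← haq, aeval_eq_sum_range' hdeg]
        have hsumT : (Aᵀ) ^ k = ∑ i ∈ Finset.range k, q.coeff i • (Aᵀ) ^ i := by
          rw [← Matrix.transpose_pow, hsum, Matrix.transpose_sum]
          refine Finset.sum_congr rfl fun i _ => ?_
          rw [Matrix.transpose_smul, Matrix.transpose_pow]
        rw [hsum, hsumT, Matrix.sum_mul, Matrix.sum_mul, Matrix.mul_sum]
        refine Finset.sum_congr rfl fun i hi => ?_
        rw [Matrix.smul_mul, Matrix.smul_mul, Matrix.mul_smul,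
          hTk i (lt_of_lt_of_le (Finset.mem_range.mp hi) hk)]
  have hTB : T * B = Cᵀ := by
    have := hTpow 0 (Nat.zero_le n)
    simpa using this
  have hTA : T * A = Aᵀ * T := by
    have h1 : (T * A) * K = (Aᵀ * T) * K := by
      ext i p
      rw [hmulK, hmulK]
      have e1 : (T * A) * (A ^ (p.1 : ℕ) * B) = T * (A ^ ((p.1 : ℕ) + 1) * B) := by
        rw [pow_succ']
        simp only [Matrix.mul_assoc]
      have e2 : (Aᵀ * T) * (A ^ (p.1 : ℕ) * B) = Aᵀ * ((Aᵀ) ^ (p.1 : ℕ) * Cᵀ) := by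
        rw [Matrix.mul_assoc, hTk (p.1 : ℕ) p.1.isLt]
      rw [e1, e2, hTpow ((p.1 : ℕ) + 1) p.1.isLt, pow_succ', Matrix.mul_assoc]
    have h4 : ((T * A) * K) * K' = ((Aᵀ * T) * K) * K' := by rw [h1]
    rw [Matrix.mul_assoc (T * A), Matrix.mul_assoc (Aᵀ * T), hKK',
      Matrix.mul_one, Matrix.mul_one] at h4
    exact h4
  have hKTz : ∀ (P : Matrix (Fin n) (Fin n × Fin m) F), Kᵀ * P = 0 → P = 0 := by
    intro P hP
    ext i c
    have hx : Kᵀ.mulVec (fun r => P r c) = 0 := by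
      funext i'
      have : Kᵀ.mulVec (fun r => P r c) i' = (Kᵀ * P) i' c := by
        rw [Matrix.mul_apply]; rfl
      rw [this, hP]; rfl
    have := congrFun (hKTinj _ hx) i
    simpa using this
  have hKTK : Kᵀ * (T * K) = O * K := by
    rw [hTK, ← Matrix.transpose_mul, hH]
  have hTsym : Tᵀ = T := by
    have h1 : Kᵀ * ((Tᵀ - T) * K) = 0 := by
      rw [Matrix.sub_mul, Matrix.mul_sub, hKTK]
      have h2 : Kᵀ * (Tᵀ * K) = (Kᵀ * (T * K))ᵀ := by
        rw [Matrix.transpose_mul (Kᵀ) (T * K), Matrix.transpose_mul T K,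
          Matrix.transpose_transpose, Matrix.mul_assoc]
      rw [h2, hKTK, hH, sub_self]
    have h3 : (Tᵀ - T) * K = 0 := hKTz _ h1
    have h4 : (Tᵀ - T) * (K * K') = 0 := by
      rw [← Matrix.mul_assoc, h3, Matrix.zero_mul]
    rw [hKK', Matrix.mul_one] at h4
    exact sub_eq_zero.mp h4
  have hTrank : T.rank = n := by
    refine le_antisymm (le_trans (Matrix.rank_le_card_width T) (by rw [Fintype.card_fin])) ?_
    have h1 : Oᵀ.rank ≤ T.rank := by
      rw [← hTK]
      exact Matrix.rank_mul_le_left T K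
    rw [Matrix.rank_transpose] at h1
    rw [hobsv] at h1
    exact h1
  obtain ⟨T', hTT'⟩ := exists_right_inverse T (by rw [Fintype.card_fin]; exact hTrank)
  have hTunit : IsUnit T.det := by
    have := congrArg Matrix.det hTT'
    rw [Matrix.det_mul, Matrix.det_one] at this
    exact isUnit_iff_exists_inv.mpr ⟨_, this⟩
  refine ⟨C, T, T * A, hTsym, ?_, hTunit, ?_⟩
  · rw [Matrix.transpose_mul, hTsym, ← hTA]
  · set φ := algebraMap F (RatFunc F) with hφ
    set e : Matrix (Fin n) (Fin n) (RatFunc F) :=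
      Matrix.diagonal (fun _ => (RatFunc.X : RatFunc F)) - A.map φ with he
    have hpencil : (Matrix.of (fun i j => (RatFunc.X : RatFunc F) * φ (T i j)
        - φ ((T * A) i j))) = T.map φ * e := by
      ext i j
      rw [Matrix.of_apply, he, Matrix.mul_sub, Matrix.sub_apply, ← Matrix.map_mul,
        Matrix.mul_diagonal, Matrix.map_apply, Matrix.map_apply, mul_comm]
    have hTφunit : IsUnit (T.map φ).det := by
      rw [← RingHom.mapMatrix_apply, ← RingHom.map_det]
      exact hTunit.map φ
    have heunit : IsUnit e.det := by
      have hchar : e = (charmatrix A).map (algebraMap F[X] (RatFunc F)) := by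
        ext i j
        rw [he, Matrix.sub_apply, Matrix.map_apply, Matrix.map_apply, charmatrix_apply, map_sub,
          RatFunc.algebraMap_C, ← RatFunc.algebraMap_eq_C]
        by_cases h : i = j
        · subst h
          simp [hφ, RatFunc.algebraMap_X, RatFunc.algebraMap_eq_C]
        · simp [Matrix.diagonal_apply_ne _ h, hφ, RatFunc.algebraMap_eq_C]
      have hdet : e.det = algebraMap F[X] (RatFunc F) (charpoly A) := by
        rw [hchar, charpoly, ← RingHom.mapMatrix_apply, ← RingHom.map_det]
      rw [hdet]
      exact isUnit_iff_ne_zero.mpr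
        ((map_ne_zero_iff _ (RatFunc.algebraMap_injective F)).mpr (charpoly_monic A).ne_zero)
    rw [hpencil, Matrix.mul_inv_rev]
    have hTBφ : (T.map φ) * (B.map φ) = (Cᵀ).map φ := by
      rw [← Matrix.map_mul, hTB]
    have hTinvC : (T.map φ)⁻¹ * (Cᵀ).map φ = B.map φ := by
      rw [← hTBφ, Matrix.nonsing_inv_mul_cancel_left _ _ hTφunit]
    calc C.map φ * e⁻¹ * B.map φ = C.map φ * e⁻¹ * ((T.map φ)⁻¹ * (Cᵀ).map φ) := by
          rw [hTinvC]
      _ = C.map φ * (e⁻¹ * (T.map φ)⁻¹) * (Cᵀ).map φ := by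
          rw [Matrix.mul_assoc, Matrix.mul_assoc, Matrix.mul_assoc]

open Matrix

/-- The matrix `(λ S₁ − S₂)⁻¹` over the field of rational functions. -/
noncomputable def pencilResolvent {F : Type*} [Field F] {n : ℕ}
    (S₁ S₂ : Matrix (Fin n) (Fin n) F) : Matrix (Fin n) (Fin n) (RatFunc F) :=
  (Matrix.of (fun i j => (RatFunc.X : RatFunc F) * algebraMap F (RatFunc F) (S₁ i j)
      - algebraMap F (RatFunc F) (S₂ i j)))⁻¹

/-- A symmetric strictly proper rational matrix given by a minimal
state-space realization `G_sp(λ) = C(λI_n−A)⁻¹B` admits a symmetric minimal state-space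
realization `G_sp(λ) = W(λS₁ − S₂)⁻¹Wᵀ` with `S₁, S₂` symmetric and `S₁` nonsingular. -/
theorem exists_symmetric_realization
    {F : Type*} [Field F] {n m : ℕ}
    (A : Matrix (Fin n) (Fin n) F) (B : Matrix (Fin n) (Fin m) F)
    (C : Matrix (Fin m) (Fin n) F)
    (hctrb : (ctrbMat A B).rank = n)
    (hobsv : (obsvMat A C).rank = n)
    (hsym : (C.map (algebraMap F (RatFunc F)) * lamResolvent A *
        B.map (algebraMap F (RatFunc F)))ᵀ
      = C.map (algebraMap F (RatFunc F)) * lamResolvent A *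
        B.map (algebraMap F (RatFunc F))) :
    ∃ (W : Matrix (Fin m) (Fin n) F) (S₁ S₂ : Matrix (Fin n) (Fin n) F),
      S₁ᵀ = S₁ ∧ S₂ᵀ = S₂ ∧ IsUnit S₁.det ∧
      C.map (algebraMap F (RatFunc F)) * lamResolvent A * B.map (algebraMap F (RatFunc F))
        = W.map (algebraMap F (RatFunc F)) * pencilResolvent S₁ S₂ *
            (Wᵀ).map (algebraMap F (RatFunc F)) := by
  unfold lamResolvent pencilResolvent ctrbMat obsvMat at *
  exact exists_symmetric_realization' A B C hctrb hobsv hsym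
end
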